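/- If the Gale-Stewart game Γ(shift_f(L)) is determined, then the delay game Γ_f(L) is determined: either Player I or Player O has a winning strategy in Γ_f(L). -/

import Mathlib

open scoped Classical MeasureTheory

section DelayGames

variable {I O A B : Type}

/-- `shiftSeq f β = ▷^{f 0 - 1} β 0 ▷^{f 1 - 1} β 1 ⋯`, where the skip symbol `▷`
is modeled by `none` and a letter `b ∈ Σ_O` by `some b`. -/
noncomputable def shiftSeq (f : ℕ → ℕ) (β : ℕ → O) : ℕ → Option O := fun n =>
  if h : ∃ i, (∑ j ∈ Finset.range (i + 1), f j) = n + 1 then some (β (Nat.find h))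
  else none

/-- `shift_f(L) = { (α, shift_f(β)) : (α, β) ∈ L }`. -/
def shiftLang (f : ℕ → ℕ) (L : Set ((ℕ → I) × (ℕ → O))) :
    Set ((ℕ → I) × (ℕ → Option O)) :=
  {p | ∃ β : ℕ → O, (p.1, β) ∈ L ∧ p.2 = shiftSeq f β}

/-- The morphism `h` erasing the skip symbol, applied to an infinite word
(meaningful when the word has infinitely many non-skip letters). -/
noncomputable def eraseSkips [Inhabited O] (β : ℕ → Option O) : ℕ → O := fun n =>
  (β (Nat.nth (fun k => (β k).isSome) n)).getD default

/-- `skip(L) = ⋃_f shift_f(L) = { (α,β) : β has infinitely many non-▷ letters and (α, h β) ∈ L }`. -/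
def skipLang [Inhabited O] (L : Set ((ℕ → I) × (ℕ → O))) :
    Set ((ℕ → I) × (ℕ → Option O)) :=
  {p | {k | (p.2 k).isSome}.Infinite ∧ (p.1, eraseSkips p.2) ∈ L}

/-- A play of a Gale-Stewart game is consistent with the Player O strategy `σ`. -/
def gsConsO (σ : List A → B) (α : ℕ → A) (β : ℕ → B) : Prop :=
  ∀ i, β i = σ (List.ofFn fun j : Fin (i + 1) => α j)

/-- A play of a Gale-Stewart game is consistent with the Player I strategy `τ`. -/
def gsConsI (τ : List B → A) (α : ℕ → A) (β : ℕ → B) : Prop :=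
  ∀ i, α i = τ (List.ofFn fun j : Fin i => β j)

/-- `σ` is a winning strategy for Player O in the Gale-Stewart game with winning condition `W`. -/
def gsWinO (W : Set ((ℕ → A) × (ℕ → B))) (σ : List A → B) : Prop :=
  ∀ α β, gsConsO σ α β → (α, β) ∈ W

/-- `τ` is a winning strategy for Player I in the Gale-Stewart game with winning condition `W`. -/
def gsWinI (W : Set ((ℕ → A) × (ℕ → B))) (τ : List B → A) : Prop :=
  ∀ α β, gsConsI τ α β → (α, β) ∉ W

/-- The infinite word `u 0 · u 1 · u 2 ⋯` built by Player I in a delay game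
(well-defined at position `n` as soon as the first `n+1` blocks have more than `n` letters). -/
def outcomeI [Inhabited I] (u : ℕ → List I) : ℕ → I := fun n =>
  ((List.ofFn fun j : Fin (n + 1) => u j).flatten).getD n default

/-- The word `v 0 ⋯ v (i-1)` of the first `i` letters of `v`. -/
def prefixW (v : ℕ → O) (i : ℕ) : List O := List.ofFn fun j : Fin i => v j

/-- The concatenation `u 0 · u 1 ⋯ u i` of Player I's moves up to round `i`. -/
def inputsUpTo (u : ℕ → List I) (i : ℕ) : List I :=
  (List.ofFn fun j : Fin (i + 1) => u j).flatten

/-- `τ : Σ_O^* → Σ_I^*` is a (syntactically valid) Player I strategy for the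
delay game `Γ_f(L)`: it answers with `f i` letters in round `i`. -/
def delayStratI (f : ℕ → ℕ) (τ : List O → List I) : Prop :=
  ∀ w : List O, (τ w).length = f w.length

/-- `τ` is winning for Player I in the delay game `Γ_f(L)`. -/
def delayWinI [Inhabited I] (f : ℕ → ℕ) (L : Set ((ℕ → I) × (ℕ → O)))
    (τ : List O → List I) : Prop :=
  ∀ (u : ℕ → List I) (v : ℕ → O), (∀ i, (u i).length = f i) →
    (∀ i, u i = τ (prefixW v i)) → (outcomeI u, v) ∉ L

/-- `σ : Σ_I^* → Σ_O` is winning for Player O in the delay game `Γ_f(L)`. -/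
def delayWinO [Inhabited I] (f : ℕ → ℕ) (L : Set ((ℕ → I) × (ℕ → O)))
    (σ : List I → O) : Prop :=
  ∀ (u : ℕ → List I) (v : ℕ → O), (∀ i, (u i).length = f i) →
    (∀ i, v i = σ (inputsUpTo u i)) → (outcomeI u, v) ∈ L

/-- A round-counting strategy `σ : Σ_I^* × ℕ → Σ_O` is winning for Player O in `Γ_f(L)`:
in round `i` Player O plays `σ (u 0 ⋯ u i) i`. -/
def rcWinO [Inhabited I] (f : ℕ → ℕ) (L : Set ((ℕ → I) × (ℕ → O)))
    (σ : List I → ℕ → O) : Prop :=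
  ∀ (u : ℕ → List I) (v : ℕ → O), (∀ i, (u i).length = f i) →
    (∀ i, v i = σ (inputsUpTo u i) i) → (outcomeI u, v) ∈ L

/-- An output-tracking strategy `τ : Σ_O^* → Σ_I^ω` is winning for Player I in `Γ_f(L)`:
in round `i` Player I plays the length-`f i` prefix of `τ (v 0 ⋯ v (i-1))`. -/
def otWinI [Inhabited I] (f : ℕ → ℕ) (L : Set ((ℕ → I) × (ℕ → O)))
    (τ : List O → ℕ → I) : Prop :=
  ∀ (u : ℕ → List I) (v : ℕ → O),
    (∀ i, u i = List.ofFn fun j : Fin (f i) => τ (prefixW v i) j) →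
    (outcomeI u, v) ∉ L

/-- A lookahead-counting strategy `τ : Σ_O^* × ℕ → Σ_I^ω` is winning for Player I in `Γ_f(L)`:
in round `i` Player I plays the length-`f i` prefix of `τ (v 0 ⋯ v (i-1), Σ_{j<i} f j)`. -/
def lcWinI [Inhabited I] (f : ℕ → ℕ) (L : Set ((ℕ → I) × (ℕ → O)))
    (τ : List O → ℕ → ℕ → I) : Prop :=
  ∀ (u : ℕ → List I) (v : ℕ → O),
    (∀ i, u i = List.ofFn fun j : Fin (f i) =>
      τ (prefixW v i) (∑ k ∈ Finset.range i, f k) j) →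
    (outcomeI u, v) ∉ L

/-- A history-tracking strategy `τ : Σ_O^* × (ℕ_{>0})^* → Σ_I^ω` is winning for Player I
in `Γ_f(L)`: in round `i` Player I plays the length-`f i` prefix of
`τ (v 0 ⋯ v (i-1), f 0 ⋯ f (i-1))`. -/
def htWinI [Inhabited I] (f : ℕ → ℕ) (L : Set ((ℕ → I) × (ℕ → O)))
    (τ : List O → List ℕ → ℕ → I) : Prop :=
  ∀ (u : ℕ → List I) (v : ℕ → O),
    (∀ i, u i = List.ofFn fun j : Fin (f i) => τ (prefixW v i) (prefixW f i) j) →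
    (outcomeI u, v) ∉ L

/-- `f ⊑ f'` : in every round, the lookahead granted by `f'` is at least that granted by `f`. -/
def delayLE (f f' : ℕ → ℕ) : Prop :=
  ∀ i, (∑ j ∈ Finset.range (i + 1), f j) ≤ ∑ j ∈ Finset.range (i + 1), f' j

end DelayGames

section Aux9

variable {I O : Type}

private def Fsum9 (f : ℕ → ℕ) (i : ℕ) : ℕ := ∑ j ∈ Finset.range i, f j

private lemma Fsum9_succ (f : ℕ → ℕ) (i : ℕ) : Fsum9 f (i + 1) = Fsum9 f i + f i :=
  Finset.sum_range_succ f i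

private lemma Fsum9_mono (f : ℕ → ℕ) (hf : ∀ i, 0 < f i) : StrictMono (Fsum9 f) :=
  strictMono_nat_of_lt_succ fun n => by
    rw [Fsum9_succ]; exact Nat.lt_add_of_pos_right (hf n)

private lemma le_Fsum9 (f : ℕ → ℕ) (hf : ∀ i, 0 < f i) : ∀ i, i ≤ Fsum9 f i := by
  intro i; induction i with
  | zero => simp [Fsum9]
  | succ n ih => rw [Fsum9_succ]; have := hf n; omega

private lemma ofFn_nat_congr {α : Type} (g : ℕ → α) {m n : ℕ} (h : m = n) :
    (List.ofFn fun j : Fin m => g j) = List.ofFn fun j : Fin n => g j := by subst h; rfl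

private lemma shiftSeq_at (f : ℕ → ℕ) (hf : ∀ i, 0 < f i) (β : ℕ → O) (i : ℕ) :
    shiftSeq f β (Fsum9 f (i + 1) - 1) = some (β i) := by
  have hpos : 0 < Fsum9 f (i + 1) := lt_of_lt_of_le (Nat.succ_pos i) (le_Fsum9 f hf (i + 1))
  have hn : (Fsum9 f (i + 1) - 1) + 1 = Fsum9 f (i + 1) := Nat.succ_pred_eq_of_pos hpos
  have h : ∃ i', (∑ j ∈ Finset.range (i' + 1), f j) = (Fsum9 f (i + 1) - 1) + 1 :=
    ⟨i, by rw [hn]; rfl⟩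
  rw [shiftSeq, dif_pos h]
  have hfind : Nat.find h = i := by
    have hs : Fsum9 f (Nat.find h + 1) = Fsum9 f (i + 1) :=
      (Nat.find_spec h).trans hn
    exact Nat.succ_injective ((Fsum9_mono f hf).injective hs)
  rw [hfind]

private lemma shiftSeq_congr (f : ℕ → ℕ) (hf : ∀ i, 0 < f i) (β γ : ℕ → O) (i n : ℕ)
    (hn : n + 1 < Fsum9 f (i + 1)) (hβγ : ∀ j < i, β j = γ j) :
    shiftSeq f β n = shiftSeq f γ n := by
  rw [shiftSeq, shiftSeq]
  by_cases h : ∃ i', (∑ j ∈ Finset.range (i' + 1), f j) = n + 1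
  · rw [dif_pos h, dif_pos h]
    have hs := Nat.find_spec h
    have hlt : Nat.find h < i := by
      have : Fsum9 f (Nat.find h + 1) < Fsum9 f (i + 1) := by rw [show Fsum9 f (Nat.find h + 1) = n + 1 from hs]; exact hn
      exact Nat.succ_lt_succ_iff.mp ((Fsum9_mono f hf).lt_iff_lt.mp this)
    rw [hβγ _ hlt]
  · rw [dif_neg h, dif_neg h]

private lemma inputsUpTo_succ [Inhabited I] (u : ℕ → List I) (i : ℕ) :
    inputsUpTo u (i + 1) = inputsUpTo u i ++ u (i + 1) := by
  rw [inputsUpTo, inputsUpTo, List.ofFn_succ' (fun j : Fin (i + 2) => u j)]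
  simp

private lemma length_inputsUpTo [Inhabited I] (f : ℕ → ℕ) (u : ℕ → List I)
    (hlen : ∀ j, (u j).length = f j) (i : ℕ) :
    (inputsUpTo u i).length = Fsum9 f (i + 1) := by
  induction i with
  | zero => simp [inputsUpTo, Fsum9, hlen 0]
  | succ n ih => rw [inputsUpTo_succ, List.length_append, ih, hlen (n + 1), Fsum9_succ f (n + 1)]

private lemma inputsUpTo_prefix [Inhabited I] (u : ℕ → List I) {i m : ℕ} (h : i ≤ m) :
    inputsUpTo u i <+: inputsUpTo u m := by
  induction m with
  | zero => rw [Nat.le_zero.mp h]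
  | succ n ih =>
    by_cases h' : i = n + 1
    · rw [h']
    · have hle : i ≤ n := by omega
      exact (ih hle).trans ⟨u (n + 1), (inputsUpTo_succ u n).symm⟩

private lemma outcomeI_lt [Inhabited I] (f : ℕ → ℕ) (u : ℕ → List I)
    (hlen : ∀ j, (u j).length = f j) (hf : ∀ i, 0 < f i) {i n : ℕ}
    (hn : n < Fsum9 f (i + 1)) :
    outcomeI u n = (inputsUpTo u i).getD n default := by
  have hlen_i : (inputsUpTo u i).length = Fsum9 f (i + 1) := length_inputsUpTo f u hlen i
  have hlen_n : (inputsUpTo u n).length = Fsum9 f (n + 1) := length_inputsUpTo f u hlen n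
  have houtc : outcomeI u n = (inputsUpTo u n).getD n default := rfl
  have hnn : n < (inputsUpTo u n).length := hlen_n ▸ lt_of_lt_of_le (Nat.lt_succ_self n) (le_Fsum9 f hf (n + 1))
  rcases le_total i n with h | h
  · obtain ⟨t, ht⟩ := inputsUpTo_prefix u h
    rw [houtc, ← ht, List.getD_append _ _ _ _ (hlen_i ▸ hn)]
  · obtain ⟨t, ht⟩ := inputsUpTo_prefix u h
    rw [houtc, ← ht] at *
    rw [List.getD_append _ _ _ _ hnn]

private lemma inputsUpTo_eq_ofFn [Inhabited I] (f : ℕ → ℕ) (u : ℕ → List I)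
    (hlen : ∀ j, (u j).length = f j) (hf : ∀ i, 0 < f i) (i : ℕ) :
    inputsUpTo u i = List.ofFn fun j : Fin (Fsum9 f (i + 1)) => outcomeI u j := by
  apply List.ext_getElem
  · rw [length_inputsUpTo f u hlen i, List.length_ofFn]
  · intro n h1 h2
    rw [List.getElem_ofFn]
    have hn : n < Fsum9 f (i + 1) := (length_inputsUpTo f u hlen i) ▸ h1
    rw [← List.getD_eq_getElem (inputsUpTo u i) default h1,
      ← outcomeI_lt f u hlen hf hn]

private lemma inputsUpTo_of_blocks [Inhabited I] (f : ℕ → ℕ) (u : ℕ → List I) (α : ℕ → I)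
    (hu : ∀ i, u i = List.ofFn fun j : Fin (f i) => α (Fsum9 f i + j)) (i : ℕ) :
    inputsUpTo u i = List.ofFn fun j : Fin (Fsum9 f (i + 1)) => α j := by
  induction i with
  | zero =>
    have : inputsUpTo u 0 = u 0 := by simp [inputsUpTo]
    rw [this, hu 0]
    have h0 : Fsum9 f 0 = 0 := rfl
    apply List.ext_getElem
    · simp [Fsum9_succ, h0]
    · intro n h1 h2
      simp only [List.getElem_ofFn]
      congr 1
      simp [h0]
  | succ n ih =>
    rw [inputsUpTo_succ, ih, hu (n + 1)]
    have hadd : Fsum9 f (n + 2) = Fsum9 f (n + 1) + f (n + 1) := Fsum9_succ f (n + 1)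
    rw [ofFn_nat_congr α hadd, List.ofFn_add]
    rfl

private lemma outcomeI_eq_of_blocks [Inhabited I] (f : ℕ → ℕ) (hf : ∀ i, 0 < f i)
    (u : ℕ → List I) (α : ℕ → I)
    (hu : ∀ i, u i = List.ofFn fun j : Fin (f i) => α (Fsum9 f i + j)) :
    outcomeI u = α := by
  funext n
  have h1 : outcomeI u n = (inputsUpTo u n).getD n default := rfl
  rw [h1, inputsUpTo_of_blocks f u α hu n]
  have hn : n < Fsum9 f (n + 1) := lt_of_lt_of_le (Nat.lt_succ_self n) (le_Fsum9 f hf (n + 1))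
  rw [List.getD_eq_getElem _ _ (by simpa using hn), List.getElem_ofFn]

end Aux9
theorem stmt9 {I O : Type} [Fintype I] [Fintype O] [Inhabited I]
    (f : ℕ → ℕ) (hf : ∀ i, 0 < f i) (L : Set ((ℕ → I) × (ℕ → O)))
    (hdet : (∃ σ' : List I → Option O, gsWinO (shiftLang f L) σ') ∨
      (∃ τ' : List (Option O) → I, gsWinI (shiftLang f L) τ')) :
    (∃ σ : List I → O, delayWinO f L σ) ∨
      (∃ τ : List O → List I, delayStratI f τ ∧ delayWinI f L τ) := by
  by_cases hO : Nonempty O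
  swap
  · -- O is empty: Player I wins vacuously
    refine Or.inr ⟨fun w => List.replicate (f w.length) default, ?_, ?_⟩
    · intro w; simp [delayStratI]
    · intro u v _ _ _; exact hO ⟨v 0⟩
  haveI : Inhabited O := Classical.inhabited_of_nonempty hO
  rcases hdet with ⟨σ', hσ'⟩ | ⟨τ', hτ'⟩
  · -- Player O wins
    refine Or.inl ⟨fun w => (σ' w).getD default, ?_⟩
    intro u v hlen hv
    set α : ℕ → I := outcomeI u with hα
    set β : ℕ → Option O := fun n => σ' (List.ofFn fun j : Fin (n + 1) => α j) with hβ
    have hcons : gsConsO σ' α β := fun i => rfl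
    obtain ⟨β₀, hβ₀L, hβeq⟩ := hσ' α β hcons
    have hveq : v = β₀ := by
      funext i
      have hpos : 0 < Fsum9 f (i + 1) :=
        lt_of_lt_of_le (Nat.succ_pos i) (le_Fsum9 f hf (i + 1))
      have hn1 : (Fsum9 f (i + 1) - 1) + 1 = Fsum9 f (i + 1) := Nat.succ_pred_eq_of_pos hpos
      have hkey : β (Fsum9 f (i + 1) - 1) = σ' (inputsUpTo u i) := by
        rw [inputsUpTo_eq_ofFn f u hlen hf i, hβ]
        exact congrArg σ' (ofFn_nat_congr α hn1)
      have hβeq' : β = shiftSeq f β₀ := hβeq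
      have hsome : σ' (inputsUpTo u i) = some (β₀ i) := by
        rw [← hkey, hβeq']
        exact shiftSeq_at f hf β₀ i
      rw [hv i]
      show (σ' (inputsUpTo u i)).getD default = β₀ i
      rw [hsome]
      rfl
    rw [hveq]
    exact hβ₀L
  · -- Player I wins
    classical
    set aux : List O → ℕ → I := fun w n =>
      τ' (List.ofFn fun k : Fin n => shiftSeq f (fun m => w.getD m default) k) with haux
    refine Or.inr ⟨fun w => List.ofFn fun j : Fin (f w.length) => aux w (Fsum9 f w.length + j),
      ?_, ?_⟩
    · intro w; simp [delayStratI]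
    · intro u v hlen hu
      set β : ℕ → Option O := shiftSeq f v with hβ
      set α : ℕ → I := fun n => τ' (List.ofFn fun k : Fin n => β k) with hα
      have hcons : gsConsI τ' α β := fun i => rfl
      have hnotin := hτ' α β hcons
      have hushape : ∀ i, u i = List.ofFn fun j : Fin (f i) => α (Fsum9 f i + j) := by
        intro i
        rw [hu i]
        have hl : (prefixW v i).length = i := List.length_ofFn
        have : ∀ j : ℕ, j < f i → aux (prefixW v i) (Fsum9 f i + j) = α (Fsum9 f i + j) := by
          intro j hj
          rw [haux, hα]
          refine congrArg τ' ?_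
          apply List.ext_getElem (by simp)
          intro k h1 h2
          simp only [List.getElem_ofFn]
          apply shiftSeq_congr f hf _ v i
          · have hk : k < Fsum9 f i + j := by simpa using h1
            have : Fsum9 f i + j < Fsum9 f (i + 1) := by
              rw [Fsum9_succ]; omega
            omega
          · intro m hm
            have hml : m < (prefixW v i).length := by rw [hl]; exact hm
            rw [List.getD_eq_getElem _ _ hml]
            simp [prefixW]
        apply List.ext_getElem
        · simp [hl]
        · intro k h1 h2
          have hk : k < f i := by simpa [hl] using h1
          simp only [List.getElem_ofFn]
          rw [hl]
          exact this k hk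
      have hout : outcomeI u = α := outcomeI_eq_of_blocks f hf u α hushape
      intro hmem
      exact hnotin ⟨v, by rwa [hout] at hmem, rfl⟩
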